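/- If φ ∈ H, A ≥ 0 and a > 0 satisfy ‖φ‖ ≤ A + a·‖Tφ‖, then for every k of the form k = 2^l, l = 0, 1, 2, ..., one has ‖φ‖ ≤ k·A + 8^{k−1}·a^k·‖T^k φ‖. -/

import Mathlib

open scoped InnerProductSpace

/-- Let `H` be a complex Hilbert space and `T : H → H` a bounded
self-adjoint operator.  If `φ ∈ H`, `A ≥ 0` and `a > 0` satisfy `‖φ‖ ≤ A + a·‖Tφ‖`,
then for every `k` of the form `k = 2^l`, `l = 0, 1, 2, ...`, one has
`‖φ‖ ≤ k·A + 8^(k-1)·a^k·‖T^k φ‖`. -/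
theorem stmt_3 {H : Type*} [NormedAddCommGroup H] [InnerProductSpace ℂ H]
    [CompleteSpace H] (T : H →L[ℂ] H) (hT : IsSelfAdjoint T)
    (φ : H) (A a : ℝ) (hA : 0 ≤ A) (ha : 0 < a)
    (h : ‖φ‖ ≤ A + a * ‖T φ‖) :
    ∀ l : ℕ, ‖φ‖ ≤ (2 ^ l : ℕ) * A + 8 ^ (2 ^ l - 1) * a ^ (2 ^ l) * ‖(T ^ (2 ^ l)) φ‖ := by
  have key : ∀ k : ℕ, ‖(T ^ k) φ‖ ^ 2 ≤ ‖φ‖ * ‖(T ^ (2 * k)) φ‖ := by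
    intro k
    have hadj : ContinuousLinearMap.adjoint (T ^ k) = T ^ k := (hT.pow k)
    have h1 : (⟪(T ^ k) φ, (T ^ k) φ⟫_ℂ) = ⟪φ, (T ^ (2 * k)) φ⟫_ℂ := by
      have h0 : (T ^ (2 * k)) φ = (T ^ k) ((T ^ k) φ) := by
        rw [two_mul, pow_add]; rfl
      have := ContinuousLinearMap.adjoint_inner_left (𝕜 := ℂ) (T ^ k) ((T ^ k) φ) φ
      rw [hadj] at this
      rw [this, h0]
    have h2 : ‖(T ^ k) φ‖ ^ 2 = RCLike.re (⟪(T ^ k) φ, (T ^ k) φ⟫_ℂ) :=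
      (inner_self_eq_norm_sq _).symm
    rw [h2, h1]
    calc RCLike.re (⟪φ, (T ^ (2 * k)) φ⟫_ℂ) ≤ ‖(⟪φ, (T ^ (2 * k)) φ⟫_ℂ)‖ := RCLike.re_le_norm _
      _ ≤ ‖φ‖ * ‖(T ^ (2 * k)) φ‖ := norm_inner_le_norm _ _
  intro l
  induction l with
  | zero => simpa using h
  | succ l ih =>
    set k := 2 ^ l with hk
    have hk1 : 1 ≤ k := Nat.one_le_two_pow
    have hc : (0:ℝ) < 8 ^ (k - 1) * a ^ k := by positivity
    set c : ℝ := 8 ^ (k - 1) * a ^ k with hcdef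
    have hkey := key k
    have hx : (0:ℝ) ≤ ‖(T ^ k) φ‖ := norm_nonneg _
    have hN : (0:ℝ) ≤ ‖φ‖ := norm_nonneg _
    have hM : (0:ℝ) ≤ ‖(T ^ (2 * k)) φ‖ := norm_nonneg _
    -- c * x ≤ N/2 + c^2 * M / 2
    have step : c * ‖(T ^ k) φ‖ ≤ ‖φ‖ / 2 + c ^ 2 * ‖(T ^ (2 * k)) φ‖ / 2 := by
      nlinarith [sq_nonneg (‖φ‖ - c ^ 2 * ‖(T ^ (2 * k)) φ‖),
        mul_le_mul_of_nonneg_left hkey (sq_nonneg c),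
        mul_nonneg (mul_nonneg hc.le hx) hN, mul_nonneg hN hM,
        mul_nonneg (mul_nonneg hc.le hc.le) hM]
    have h2N : ‖φ‖ ≤ 2 * (k : ℝ) * A + c ^ 2 * ‖(T ^ (2 * k)) φ‖ := by nlinarith [ih]
    have hpow : (2:ℕ) ^ (l + 1) = 2 * k := by rw [hk]; ring
    rw [hpow]
    have hc2 : c ^ 2 ≤ 8 ^ (2 * k - 1) * a ^ (2 * k) := by
      rw [hcdef, mul_pow, ← pow_mul, ← pow_mul]
      have h8 : (8:ℝ) ^ ((k - 1) * 2) ≤ 8 ^ (2 * k - 1) := by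
        apply pow_le_pow_right₀ (by norm_num)
        omega
      rw [Nat.mul_comm k 2]
      exact mul_le_mul_of_nonneg_right h8 (pow_nonneg ha.le _)
    calc ‖φ‖ ≤ 2 * (k : ℝ) * A + c ^ 2 * ‖(T ^ (2 * k)) φ‖ := h2N
      _ ≤ (↑(2 * k) : ℝ) * A + 8 ^ (2 * k - 1) * a ^ (2 * k) * ‖(T ^ (2 * k)) φ‖ := by
          have h3 := mul_le_mul_of_nonneg_right hc2 hM
          push_cast at h3 ⊢
          nlinarith [h3]
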